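/- Let G be a digraph and let e be an edge of G that is not a loop. Let Mult_e(G) be the set of multipaths of G containing e, ordered by inclusion, and let C̃_e(G) be the digraph obtained from the MP-contraction G ⫽ e by deleting all loops at the newly added vertex x. Then the map C_e sending each multipath H containing e to C̃_e(H) is an order isomorphism between the poset Mult_e(G) and the poset Mult(C̃_e(G)) of multipaths of C̃_e(G), ordered by inclusion. -/

import Mathlib

set_option autoImplicit false

noncomputable section

attribute [local instance] Classical.propDecidable

/-- A (finite) directed multigraph: finitely many vertices and edges, each edge
has a source and a target.  (Loops and, a priori, parallel edges are allowed;
the paper's convention of at most one edge between an ordered pair of distinct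
vertices is imposed via `DiGraph.EdgeUnique`.) -/
structure DiGraph where
  V : Type
  E : Type
  [fintV : Fintype V]
  [decV : DecidableEq V]
  [fintE : Fintype E]
  [decE : DecidableEq E]
  s : E → V
  t : E → V

attribute [instance] DiGraph.fintV DiGraph.decV DiGraph.fintE DiGraph.decE

namespace DiGraph

/-- For each ordered pair of *distinct* vertices there is at most one edge. -/
def EdgeUnique (G : DiGraph) : Prop :=
  ∀ e f : G.E, G.s e = G.s f → G.t e = G.t f → G.s e ≠ G.t e → e = f

/-- G has no loops. -/
def Loopless (G : DiGraph) : Prop := ∀ e : G.E, G.s e ≠ G.t e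

/-- A coherently oriented cycle, given as the (cyclically ordered) list of its
edges: the list is nonempty, has no repeated edges, visits no vertex twice,
and the target of each edge is the source of the next one (cyclically).
A loop is a coherently oriented cycle of length 1. -/
def IsCohCycle (G : DiGraph) (c : List G.E) : Prop :=
  c ≠ [] ∧ c.Nodup ∧ (c.map G.s).Nodup ∧
    ∀ i : Fin c.length,
      G.t (c.get i) =
        G.s (c.get ⟨(i.val + 1) % c.length,
          Nat.mod_lt _ (Nat.lt_of_le_of_lt (Nat.zero_le _) i.isLt)⟩)

/-- `m` is (the edge set of) a multipath of `G`: the corresponding spanning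
subgraph has no loops, in-degree and out-degree at most one at each vertex, and
contains no coherently oriented cycle; equivalently, every connected component
is a single vertex or a simple (directed) path. -/
def IsMultipath (G : DiGraph) (m : Finset G.E) : Prop :=
  (∀ e ∈ m, G.s e ≠ G.t e) ∧
  (∀ e ∈ m, ∀ f ∈ m, G.s e = G.s f → e = f) ∧
  (∀ e ∈ m, ∀ f ∈ m, G.t e = G.t f → e = f) ∧
  ¬∃ c : List G.E, IsCohCycle G c ∧ ∀ g ∈ c, g ∈ m

/-- The forbidden pattern (A): vertices v0,v1,v2 and edges (v1,v0), (v0,v2), (v1,v2). -/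
def HasPatternA (G : DiGraph) : Prop :=
  ∃ v0 v1 v2 : G.V, v0 ≠ v1 ∧ v0 ≠ v2 ∧ v1 ≠ v2 ∧
    (∃ e : G.E, G.s e = v1 ∧ G.t e = v0) ∧
    (∃ e : G.E, G.s e = v0 ∧ G.t e = v2) ∧
    (∃ e : G.E, G.s e = v1 ∧ G.t e = v2)

/-- The reverse of pattern (A). -/
def HasPatternArev (G : DiGraph) : Prop :=
  ∃ v0 v1 v2 : G.V, v0 ≠ v1 ∧ v0 ≠ v2 ∧ v1 ≠ v2 ∧
    (∃ e : G.E, G.s e = v0 ∧ G.t e = v1) ∧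
    (∃ e : G.E, G.s e = v2 ∧ G.t e = v0) ∧
    (∃ e : G.E, G.s e = v2 ∧ G.t e = v1)

/-- The forbidden pattern (B): vertices v0,v1,v2,v3 and edges (v0,v1), (v2,v1), (v2,v3). -/
def HasPatternB (G : DiGraph) : Prop :=
  ∃ v0 v1 v2 v3 : G.V,
    v0 ≠ v1 ∧ v0 ≠ v2 ∧ v0 ≠ v3 ∧ v1 ≠ v2 ∧ v1 ≠ v3 ∧ v2 ≠ v3 ∧
    (∃ e : G.E, G.s e = v0 ∧ G.t e = v1) ∧
    (∃ e : G.E, G.s e = v2 ∧ G.t e = v1) ∧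
    (∃ e : G.E, G.s e = v2 ∧ G.t e = v3)

/-- The reverse of pattern (B). -/
def HasPatternBrev (G : DiGraph) : Prop :=
  ∃ v0 v1 v2 v3 : G.V,
    v0 ≠ v1 ∧ v0 ≠ v2 ∧ v0 ≠ v3 ∧ v1 ≠ v2 ∧ v1 ≠ v3 ∧ v2 ≠ v3 ∧
    (∃ e : G.E, G.s e = v1 ∧ G.t e = v0) ∧
    (∃ e : G.E, G.s e = v1 ∧ G.t e = v2) ∧
    (∃ e : G.E, G.s e = v3 ∧ G.t e = v2)

/-- (MP1): G contains no copy, up to reversing all orientations, of the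
patterns (A) and (B). -/
def MP1 (G : DiGraph) : Prop :=
  ¬HasPatternA G ∧ ¬HasPatternArev G ∧ ¬HasPatternB G ∧ ¬HasPatternBrev G

/-- (MP2): every coherently oriented cycle of length ≥ 2 (i.e. loops excluded)
is a connected component: any edge incident to a vertex of the cycle belongs
to the cycle. -/
def MP2 (G : DiGraph) : Prop :=
  ∀ c : List G.E, IsCohCycle G c → 2 ≤ c.length →
    ∀ f : G.E, (∃ g ∈ c, G.s g = G.s f ∨ G.s g = G.t f) → f ∈ c

def IsMPDigraph (G : DiGraph) : Prop := MP1 G ∧ MP2 G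

/-- The axioms (I1), (I2), (I3) for a family of independent sets of a matroid. -/
def IsIndepFamily {α : Type} [DecidableEq α] (I : Finset α → Prop) : Prop :=
  I ∅ ∧ (∀ A B : Finset α, I A → B ⊆ A → I B) ∧
    ∀ A B : Finset α, I A → I B → B.card < A.card →
      ∃ x ∈ A, x ∉ B ∧ I (insert x B)

/-- `m` is the edge set of a linear sink (two non-loop edges with a common
target and distinct sources). -/
def IsLinearSinkSet (G : DiGraph) (m : Finset G.E) : Prop :=
  ∃ e1 e2 : G.E, e1 ≠ e2 ∧ m = {e1, e2} ∧ G.t e1 = G.t e2 ∧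
    G.s e1 ≠ G.s e2 ∧ G.s e1 ≠ G.t e1 ∧ G.s e2 ≠ G.t e2

/-- `m` is the edge set of a linear source (two non-loop edges with a common
source and distinct targets). -/
def IsLinearSourceSet (G : DiGraph) (m : Finset G.E) : Prop :=
  ∃ e1 e2 : G.E, e1 ≠ e2 ∧ m = {e1, e2} ∧ G.s e1 = G.s e2 ∧
    G.t e1 ≠ G.t e2 ∧ G.s e1 ≠ G.t e1 ∧ G.s e2 ≠ G.t e2

/-- `m` is the edge set of a coherently oriented cycle (possibly a loop). -/
def IsCohCycleSet (G : DiGraph) (m : Finset G.E) : Prop :=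
  ∃ c : List G.E, IsCohCycle G c ∧ m = c.toFinset

/-- Two vertices are adjacent if they are the endpoints of a common edge. -/
def adj (G : DiGraph) (v w : G.V) : Prop :=
  ∃ e : G.E, (G.s e = v ∧ G.t e = w) ∨ (G.s e = w ∧ G.t e = v)

/-- Two vertices lie in the same connected component. -/
def connRel (G : DiGraph) : G.V → G.V → Prop := Relation.EqvGen (adj G)

/-- G is connected. -/
def ConnectedD (G : DiGraph) : Prop := Nonempty G.V ∧ ∀ v w : G.V, connRel G v w

/-- The number of connected components of G (isolated vertices count). -/
def numComponents (G : DiGraph) : ℕ :=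
  Nat.card (Quotient (Relation.EqvGen.setoid (adj G)))

/-- `S` is the set of edges of one of the connected components of `G`. -/
def IsComponentEdges (G : DiGraph) (S : Finset G.E) : Prop :=
  ∃ v : G.V, S = Finset.univ.filter (fun e => connRel G v (G.s e))

/-- in-degree of `v` in the subgraph spanned by the edges of `R`. -/
def indegIn (G : DiGraph) (R : Finset G.E) (v : G.V) : ℕ :=
  (R.filter (fun e => G.t e = v)).card

/-- out-degree of `v` in the subgraph spanned by the edges of `R`. -/
def outdegIn (G : DiGraph) (R : Finset G.E) (v : G.V) : ℕ :=
  (R.filter (fun e => G.s e = v)).card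

def indeg (G : DiGraph) (v : G.V) : ℕ := indegIn G Finset.univ v
def outdeg (G : DiGraph) (v : G.V) : ℕ := outdegIn G Finset.univ v

/-- `v` is a vertex of the subgraph spanned by the edge set `R`. -/
def IncidentTo (G : DiGraph) (R : Finset G.E) (v : G.V) : Prop :=
  ∃ e ∈ R, G.s e = v ∨ G.t e = v

/-- `v` is stable in the subgraph spanned by `R`. -/
def StableIn (G : DiGraph) (R : Finset G.E) (v : G.V) : Prop :=
  indegIn G R v = 0 ∨ outdegIn G R v = 0

/-- `v` is unstable in `G`. -/
def UnstableG (G : DiGraph) (v : G.V) : Prop :=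
  0 < indeg G v ∧ 0 < outdeg G v

/-- adjacency within the subgraph spanned by `R`. -/
def adjIn (G : DiGraph) (R : Finset G.E) (a b : G.V) : Prop :=
  ∃ g ∈ R, (G.s g = a ∧ G.t g = b) ∨ (G.s g = b ∧ G.t g = a)

/-- The subgraph spanned by the edge set `R` is connected. -/
def EdgeConnected (G : DiGraph) (R : Finset G.E) : Prop :=
  ∀ e ∈ R, ∀ f ∈ R, Relation.EqvGen (adjIn G R) (G.s e) (G.s f)

/-- `R` spans a dynamical region of `G`: it is connected, has at least one
edge, every boundary vertex is unstable in `G` but stable in `R` and in its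
complement, and no edge of `R` lies on an oriented cycle of `G` not contained
in `R`. -/
def IsDynRegion (G : DiGraph) (R : Finset G.E) : Prop :=
  R.Nonempty ∧ EdgeConnected G R ∧
  (∀ v : G.V, IncidentTo G R v → IncidentTo G (Finset.univ \ R) v →
     UnstableG G v ∧ StableIn G R v ∧ StableIn G (Finset.univ \ R) v) ∧
  (∀ c : List G.E, IsCohCycle G c → (∃ g ∈ c, g ∈ R) → ∀ g ∈ c, g ∈ R)

/-- A dynamical module is a minimal dynamical region. -/
def IsDynModule (G : DiGraph) (R : Finset G.E) : Prop :=
  IsDynRegion G R ∧ ∀ R' ⊆ R, IsDynRegion G R' → R' = R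

/-- `G` is a sink on `n+1` vertices. -/
def IsSinkGraph (G : DiGraph) : Prop :=
  Loopless G ∧ Fintype.card G.V = Fintype.card G.E + 1 ∧
    ∃! v : G.V, ∀ e : G.E, G.t e = v

/-- `G` is a source on `n+1` vertices. -/
def IsSourceGraph (G : DiGraph) : Prop :=
  Loopless G ∧ Fintype.card G.V = Fintype.card G.E + 1 ∧
    ∃! v : G.V, ∀ e : G.E, G.s e = v

/-- `R` spans a sink: all its edges are non-loops with a common target and
pairwise distinct sources. -/
def IsSinkSet (G : DiGraph) (R : Finset G.E) : Prop :=
  ∃ v : G.V, (∀ e ∈ R, G.t e = v ∧ G.s e ≠ v) ∧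
    ∀ e ∈ R, ∀ f ∈ R, G.s e = G.s f → e = f

/-- `R` spans a source. -/
def IsSourceSet (G : DiGraph) (R : Finset G.E) : Prop :=
  ∃ v : G.V, (∀ e ∈ R, G.s e = v ∧ G.t e ≠ v) ∧
    ∀ e ∈ R, ∀ f ∈ R, G.t e = G.t f → e = f

/-- The whole digraph `G` is a coherently oriented cycle. -/
def IsCohCycleGraph (G : DiGraph) : Prop :=
  ∃ c : List G.E, IsCohCycle G c ∧ (∀ e : G.E, e ∈ c) ∧
    ∀ v : G.V, ∃ g ∈ c, G.s g = v

/-- Rank function of the multipath matroid: the size of a largest multipath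
contained in `A`. -/
def mrank (G : DiGraph) (A : Finset G.E) : ℕ :=
  (A.powerset.filter (fun m => IsMultipath G m)).sup Finset.card

/-- The Tutte polynomial of the multipath matroid of `G`, evaluated at `(x,y)`. -/
def tutte (G : DiGraph) (x y : ℤ) : ℤ :=
  ∑ A : Finset G.E,
    (x - 1) ^ (mrank G Finset.univ - mrank G A) *
      (y - 1) ^ (A.card - mrank G A)

/-- `e` is a loop of the multipath matroid. -/
def IsMatroidLoop (G : DiGraph) (e : G.E) : Prop := ¬IsMultipath G {e}

/-- `e` is a coloop of the multipath matroid: it belongs to every maximal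
independent set. -/
def IsColoop (G : DiGraph) (e : G.E) : Prop :=
  ∀ m : Finset G.E, IsMultipath G m →
    (∀ m' : Finset G.E, IsMultipath G m' → m ⊆ m' → m' = m) → e ∈ m

/-- The digraph obtained from `G` by deleting the edge `e`. -/
def deleteEdge (G : DiGraph) (e : G.E) : DiGraph where
  V := G.V
  E := {f : G.E // f ≠ e}
  s := fun f => G.s f.val
  t := fun f => G.t f.val

/-- The vertex set of the MP-contraction `G ⫽ e`: the vertices of `G` other
than the endpoints of `e`, together with a new vertex `x = Sum.inr ()`. -/
def CVert (G : DiGraph) (e : G.E) : Type :=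
  {u : G.V // u ≠ G.s e ∧ u ≠ G.t e} ⊕ Unit

instance (G : DiGraph) (e : G.E) : Fintype (CVert G e) := by
  unfold CVert; infer_instance

instance (G : DiGraph) (e : G.E) : DecidableEq (CVert G e) := by
  unfold CVert; infer_instance

/-- Source, in `G ⫽ e`, of the edge coming from the edge `f` of `G`
(for `e = (v,w)`, the new source is `x` iff `s f ∈ {v,w}` or `t f = w`). -/
def contrS (G : DiGraph) (e f : G.E) : CVert G e :=
  if h : G.s f = G.s e ∨ G.s f = G.t e ∨ G.t f = G.t e then Sum.inr ()
  else Sum.inl ⟨G.s f, by push_neg at h; exact ⟨h.1, h.2.1⟩⟩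

/-- Target, in `G ⫽ e`, of the edge coming from the edge `f` of `G`
(for `e = (v,w)`, the new target is `x` iff `t f ∈ {v,w}` or `s f = v`). -/
def contrT (G : DiGraph) (e f : G.E) : CVert G e :=
  if h : G.t f = G.s e ∨ G.t f = G.t e ∨ G.s f = G.s e then Sum.inr ()
  else Sum.inl ⟨G.t f, by push_neg at h; exact ⟨h.1, h.2.1⟩⟩

/-- The MP-contraction `G ⫽ e`. -/
def mpContract (G : DiGraph) (e : G.E) : DiGraph where
  V := CVert G e
  E := {f : G.E // f ≠ e}
  s := fun f => contrS G e f.val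
  t := fun f => contrT G e f.val

/-- The digraph `C̃_e(G)`: the MP-contraction `G ⫽ e` with all loops at the
new vertex `x` deleted. -/
def tildeC (G : DiGraph) (e : G.E) : DiGraph where
  V := CVert G e
  E := {f : G.E // f ≠ e ∧
         ¬(contrS G e f = Sum.inr () ∧ contrT G e f = Sum.inr ())}
  s := fun f => contrS G e f.val
  t := fun f => contrT G e f.val

/-- The classical contraction `G / e` of a non-loop edge `e = (v,w)`:
identify `w` with `v` and delete `e`. -/
def contractClassical (G : DiGraph) (e : G.E) (hne : G.s e ≠ G.t e) : DiGraph where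
  V := {u : G.V // u ≠ G.t e}
  E := {f : G.E // f ≠ e}
  s := fun f => if h : G.s f.val = G.t e then ⟨G.s e, hne⟩ else ⟨G.s f.val, h⟩
  t := fun f => if h : G.t f.val = G.t e then ⟨G.s e, hne⟩ else ⟨G.t f.val, h⟩

/-- A flowing k-colouring of `G`. -/
def IsFlowing (G : DiGraph) (k : ℕ) (c : G.V → Fin k) : Prop :=
  (∀ e : G.E, c (G.s e) ≠ c (G.t e)) ∧
  (∀ e f : G.E, G.t e = G.t f → c (G.s e) = c (G.s f)) ∧
  (∀ e f : G.E, G.s e = G.s f → c (G.t e) = c (G.t f))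

/-- The number of flowing k-colourings of `G`. -/
def tau (G : DiGraph) (k : ℕ) : ℕ :=
  Nat.card {c : G.V → Fin k // IsFlowing G k c}

/-- The spanning subgraph of `G` with edge set `S`. -/
def subgraphOn (G : DiGraph) (S : Finset G.E) : DiGraph where
  V := G.V
  E := {f : G.E // f ∈ S}
  s := fun f => G.s f.val
  t := fun f => G.t f.val

/-- The underlying undirected multigraph of `G` contains a cycle
(of length ≥ 1; a single loop, or two parallel/antiparallel edges, count). -/
def HasUndirCycle (G : DiGraph) : Prop :=
  ∃ (n : ℕ) (ed : Fin n → G.E) (vx : Fin n → G.V),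
    0 < n ∧ Function.Injective ed ∧ Function.Injective vx ∧
    ∀ i : Fin n,
      (G.s (ed i) = vx i ∧ G.t (ed i) = vx ⟨(i.val + 1) % n, Nat.mod_lt _ i.pos⟩) ∨
      (G.t (ed i) = vx i ∧ G.s (ed i) = vx ⟨(i.val + 1) % n, Nat.mod_lt _ i.pos⟩)

/-- The underlying undirected multigraph of `G` is a forest. -/
def IsForestD (G : DiGraph) : Prop := ¬HasUndirCycle G

/-- The underlying undirected multigraph of `G` is a tree. -/
def IsTreeD (G : DiGraph) : Prop := ConnectedD G ∧ IsForestD G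

/-- The multipath matroid of `G` is representable over the field `F`. -/
def RepOver (G : DiGraph) (F : Type) [Field F] : Prop :=
  ∃ (n : ℕ) (N : Matrix (Fin n) G.E F),
    ∀ m : Finset G.E, IsMultipath G m ↔
      LinearIndependent F (fun f : {x : G.E // x ∈ m} => N.transpose f.val)

end DiGraph

/-- A finite undirected multigraph. -/
structure Multigraph where
  V : Type
  E : Type
  [fintV : Fintype V]
  [decV : DecidableEq V]
  [fintE : Fintype E]
  [decE : DecidableEq E]
  ends : E → Sym2 V

attribute [instance] Multigraph.fintV Multigraph.decV Multigraph.fintE Multigraph.decE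

/-- The multigraph `M` has a cycle all of whose edges lie in `F`. -/
def Multigraph.HasCycleIn (M : Multigraph) (F : Finset M.E) : Prop :=
  ∃ (n : ℕ) (ed : Fin n → M.E) (vx : Fin n → M.V),
    0 < n ∧ Function.Injective ed ∧ Function.Injective vx ∧
    (∀ i : Fin n, ed i ∈ F) ∧
    ∀ i : Fin n, M.ends (ed i) = s(vx i, vx ⟨(i.val + 1) % n, Nat.mod_lt _ i.pos⟩)

attribute [reducible] DiGraph.CVert

section ContractionAux
open DiGraph

variable {G : DiGraph} {e : G.E}

/-- A "nice" edge relative to `e`. -/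
def CNice (G : DiGraph) (e : G.E) (f : G.E) : Prop :=
  f ≠ e ∧ G.s f ≠ G.s e ∧ G.t f ≠ G.t e ∧ ¬(G.s f = G.t e ∧ G.t f = G.s e)

lemma contrS_inr_iff (f : G.E) :
    contrS G e f = Sum.inr () ↔ (G.s f = G.s e ∨ G.s f = G.t e ∨ G.t f = G.t e) := by
  unfold contrS; split <;> simp_all

lemma contrT_inr_iff (f : G.E) :
    contrT G e f = Sum.inr () ↔ (G.t f = G.s e ∨ G.t f = G.t e ∨ G.s f = G.s e) := by
  unfold contrT; split <;> simp_all

lemma contrS_val {f : G.E} (h : contrS G e f ≠ Sum.inr ()) :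
    ∃ hp : G.s f ≠ G.s e ∧ G.s f ≠ G.t e, contrS G e f = Sum.inl ⟨G.s f, hp⟩ := by
  rw [ne_eq, contrS_inr_iff] at h
  push_neg at h
  exact ⟨⟨h.1, h.2.1⟩, by unfold contrS; rw [dif_neg (by push_neg; exact h)]⟩

lemma contrT_val {f : G.E} (h : contrT G e f ≠ Sum.inr ()) :
    ∃ hp : G.t f ≠ G.s e ∧ G.t f ≠ G.t e, contrT G e f = Sum.inl ⟨G.t f, hp⟩ := by
  rw [ne_eq, contrT_inr_iff] at h
  push_neg at h
  exact ⟨⟨h.1, h.2.1⟩, by unfold contrT; rw [dif_neg (by push_neg; exact h)]⟩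

lemma nice_s_inr {f : G.E} (hf : CNice G e f) :
    contrS G e f = Sum.inr () ↔ G.s f = G.t e := by
  rw [contrS_inr_iff]
  constructor
  · rintro (h | h | h)
    · exact absurd h hf.2.1
    · exact h
    · exact absurd h hf.2.2.1
  · exact fun h => Or.inr (Or.inl h)

lemma nice_t_inr {f : G.E} (hf : CNice G e f) :
    contrT G e f = Sum.inr () ↔ G.t f = G.s e := by
  rw [contrT_inr_iff]
  constructor
  · rintro (h | h | h)
    · exact h
    · exact absurd h hf.2.2.1
    · exact absurd h hf.2.1
  · exact fun h => Or.inl h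

lemma nice_edge {f : G.E} (hf : CNice G e f) :
    f ≠ e ∧ ¬(contrS G e f = Sum.inr () ∧ contrT G e f = Sum.inr ()) :=
  ⟨hf.1, fun h => hf.2.2.2 ⟨(nice_s_inr hf).1 h.1, (nice_t_inr hf).1 h.2⟩⟩

lemma nice_of_tildeC (f : (tildeC G e).E) : CNice G e f.val := by
  obtain ⟨h1, h2⟩ := f.2
  refine ⟨h1, ?_, ?_, ?_⟩
  · intro hs
    exact h2 ⟨(contrS_inr_iff _).2 (Or.inl hs), (contrT_inr_iff _).2 (Or.inr (Or.inr hs))⟩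
  · intro ht
    exact h2 ⟨(contrS_inr_iff _).2 (Or.inr (Or.inr ht)), (contrT_inr_iff _).2 (Or.inr (Or.inl ht))⟩
  · rintro ⟨hs, ht⟩
    exact h2 ⟨(contrS_inr_iff _).2 (Or.inr (Or.inl hs)), (contrT_inr_iff _).2 (Or.inl ht)⟩

lemma s_eq_of_contrS_eq {f g : G.E} (hf : CNice G e f) (hg : CNice G e g)
    (h : contrS G e f = contrS G e g) : G.s f = G.s g := by
  by_cases hi : contrS G e f = Sum.inr ()
  · have hi' : contrS G e g = Sum.inr () := h.symm.trans hi
    rw [(nice_s_inr hf).1 hi, (nice_s_inr hg).1 hi']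
  · have hi' : contrS G e g ≠ Sum.inr () := fun hh => hi (h.trans hh)
    obtain ⟨p1, e1⟩ := contrS_val hi
    obtain ⟨p2, e2⟩ := contrS_val hi'
    rw [e1, e2] at h
    injection h with h'
    exact congrArg Subtype.val h'

lemma t_eq_of_contrT_eq {f g : G.E} (hf : CNice G e f) (hg : CNice G e g)
    (h : contrT G e f = contrT G e g) : G.t f = G.t g := by
  by_cases hi : contrT G e f = Sum.inr ()
  · have hi' : contrT G e g = Sum.inr () := h.symm.trans hi
    rw [(nice_t_inr hf).1 hi, (nice_t_inr hg).1 hi']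
  · have hi' : contrT G e g ≠ Sum.inr () := fun hh => hi (h.trans hh)
    obtain ⟨p1, e1⟩ := contrT_val hi
    obtain ⟨p2, e2⟩ := contrT_val hi'
    rw [e1, e2] at h
    injection h with h'
    exact congrArg Subtype.val h'

lemma contrS_congr {f g : G.E} (hf : CNice G e f) (hg : CNice G e g)
    (h : G.s f = G.s g) : contrS G e f = contrS G e g := by
  by_cases hw : G.s f = G.t e
  · rw [(nice_s_inr hf).2 hw, (nice_s_inr hg).2 (h.symm.trans hw)]
  · have hf' : contrS G e f ≠ Sum.inr () := by rw [ne_eq, nice_s_inr hf]; exact hw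
    have hg' : contrS G e g ≠ Sum.inr () := by
      rw [ne_eq, nice_s_inr hg]; exact fun hh => hw (h.trans hh)
    obtain ⟨p1, e1⟩ := contrS_val hf'
    obtain ⟨p2, e2⟩ := contrS_val hg'
    rw [e1, e2]
    exact congrArg Sum.inl (Subtype.ext h)

lemma contrT_congr {f g : G.E} (hf : CNice G e f) (hg : CNice G e g)
    (h : G.t f = G.t g) : contrT G e f = contrT G e g := by
  by_cases hw : G.t f = G.s e
  · rw [(nice_t_inr hf).2 hw, (nice_t_inr hg).2 (h.symm.trans hw)]
  · have hf' : contrT G e f ≠ Sum.inr () := by rw [ne_eq, nice_t_inr hf]; exact hw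
    have hg' : contrT G e g ≠ Sum.inr () := by
      rw [ne_eq, nice_t_inr hg]; exact fun hh => hw (h.trans hh)
    obtain ⟨p1, e1⟩ := contrT_val hf'
    obtain ⟨p2, e2⟩ := contrT_val hg'
    rw [e1, e2]
    exact congrArg Sum.inl (Subtype.ext h)

lemma junction_of {f g : G.E} (hf : CNice G e f) (hg : CNice G e g)
    (h : G.t f = G.s g) : contrT G e f = contrS G e g := by
  have h1 : contrT G e f ≠ Sum.inr () := by
    rw [ne_eq, nice_t_inr hf, h]; exact hg.2.1
  have h2 : contrS G e g ≠ Sum.inr () := by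
    rw [ne_eq, nice_s_inr hg, ← h]; exact hf.2.2.1
  obtain ⟨p1, e1⟩ := contrT_val h1
  obtain ⟨p2, e2⟩ := contrS_val h2
  rw [e1, e2]
  exact congrArg Sum.inl (Subtype.ext h)

lemma eq_of_junction {f g : G.E} (h : contrT G e f = contrS G e g)
    (hg : contrS G e g ≠ Sum.inr ()) : G.t f = G.s g := by
  have hf : contrT G e f ≠ Sum.inr () := by rw [h]; exact hg
  obtain ⟨p1, e1⟩ := contrT_val hf
  obtain ⟨p2, e2⟩ := contrS_val hg
  rw [e1, e2] at h
  injection h with h'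
  exact congrArg Subtype.val h'

lemma get_congr {α : Type*} (l : List α) {a b : ℕ} {ha : a < l.length} (h : a = b) :
    l.get ⟨a, ha⟩ = l.get ⟨b, h ▸ ha⟩ := by subst h; rfl

lemma get_map' {α β : Type*} (f : α → β) (l : List α) (i : Fin (l.map f).length) :
    (l.map f).get i = f (l.get ⟨i.val, i.isLt.trans_eq (by simp)⟩) := by
  simp

lemma isCohCycle_rotate {H : DiGraph} {c : List H.E} (h : IsCohCycle H c) (k : ℕ) :
    IsCohCycle H (c.rotate k) := by
  obtain ⟨h1, h2, h3, h4⟩ := h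
  have hpos : 0 < c.length := List.length_pos_iff.2 h1
  refine ⟨fun hn => h1 (List.rotate_eq_nil_iff.1 hn), List.nodup_rotate.2 h2,
    by rw [List.map_rotate]; exact List.nodup_rotate.2 h3, ?_⟩
  have hidx : ∀ a : ℕ, ((a + 1) % (c.rotate k).length + k) % c.length
      = ((a + k) % c.length + 1) % c.length := by
    intro a
    rw [List.length_rotate, Nat.mod_add_mod, Nat.mod_add_mod]
    congr 1
    omega
  intro i
  rw [List.get_rotate, List.get_rotate, get_congr _ (hidx i.val)]
  exact h4 ⟨(↑i + k) % c.length, Nat.mod_lt _ hpos⟩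

lemma map_s_val_nodup {c : List (tildeC G e).E}
    (h3 : (c.map (tildeC G e).s).Nodup) :
    (List.map (fun f : (tildeC G e).E => G.s f.val) c).Nodup := by
  refine List.Nodup.map_on ?_ (h3.of_map _)
  intro x hx y hy hxy
  exact List.inj_on_of_nodup_map h3 hx hy
    (contrS_congr (nice_of_tildeC x) (nice_of_tildeC y) hxy)

lemma lift_cycle_noinr (c : List (tildeC G e).E) (hc : IsCohCycle (tildeC G e) c)
    (h0 : ∀ i : Fin c.length, contrS G e (c.get i).val ≠ Sum.inr ()) :
    IsCohCycle G (c.map Subtype.val) := by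
  obtain ⟨h1, h2, h3, h4⟩ := hc
  refine ⟨fun hn => h1 (List.map_eq_nil_iff.1 hn),
    h2.map Subtype.val_injective, ?_, ?_⟩
  · erw [List.map_map]
    exact map_s_val_nodup h3
  · intro i
    have hi : (i : ℕ) < c.length := by exact i.isLt.trans_eq (by erw [List.length_map]; rfl)
    erw [get_map', get_map', get_congr c (show (i.val + 1) % (c.map Subtype.val).length
      = (i.val + 1) % c.length from
        congrArg (fun L => (i.val + 1) % L) (show (c.map Subtype.val).length = c.length by
          erw [List.length_map]; rfl))]
    exact eq_of_junction (h4 ⟨i, hi⟩) (h0 _)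

lemma lift_cycle_inr (hne : G.s e ≠ G.t e) (c : List (tildeC G e).E)
    (hc : IsCohCycle (tildeC G e) c) (hl : 0 < c.length)
    (h0 : contrS G e (c.get ⟨0, hl⟩).val = Sum.inr ()) :
    IsCohCycle G (e :: c.map Subtype.val) := by
  obtain ⟨h1, h2, h3, h4⟩ := hc
  have h3' : (List.map (fun f : (tildeC G e).E => contrS G e f.val) c).Nodup := h3
  have hnotinr : ∀ j : Fin c.length, j.val ≠ 0 →
      contrS G e (c.get j).val ≠ Sum.inr () := by
    intro j hj hcon
    have hgg : c.get j = c.get ⟨0, hl⟩ := by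
      refine List.inj_on_of_nodup_map h3' (List.get_mem _ _) (List.get_mem _ _) ?_
      rw [hcon, h0]
    rw [h2.get_inj_iff] at hgg
    exact hj (congrArg Fin.val hgg)
  have hw : G.s (c.get ⟨0, hl⟩).val = G.t e := (nice_s_inr (nice_of_tildeC _)).1 h0
  have hn : (e :: List.map Subtype.val c).length = c.length + 1 := by erw [List.length_cons, List.length_map]; rfl
  refine ⟨List.cons_ne_nil _ _, ?_, ?_, ?_⟩
  · rw [List.nodup_cons]
    refine ⟨?_, h2.map Subtype.val_injective⟩
    erw [List.mem_map]
    rintro ⟨x, hx, hval⟩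
    exact (nice_of_tildeC x).1 hval
  · erw [List.map_cons, List.map_map, List.nodup_cons]
    constructor
    · erw [List.mem_map]
      rintro ⟨x, hx, hval⟩
      exact (nice_of_tildeC x).2.1 hval
    · exact map_s_val_nodup h3
  · intro i
    obtain ⟨iv, hiv⟩ := i
    rcases Nat.eq_zero_or_pos iv with h0' | hposiv
    · subst h0'
      have hidx : (0 + 1) % (e :: List.map Subtype.val c).length = 0 + 1 := by
        rw [hn]; exact Nat.mod_eq_of_lt (by omega)
      rw [get_congr _ hidx, List.get_cons_succ]; erw [get_map']
      exact hw.symm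
    · obtain ⟨j, rfl⟩ : ∃ j, iv = j + 1 := ⟨iv - 1, by omega⟩
      have hj : j < c.length := by rw [hn] at hiv; omega
      rw [List.get_cons_succ]; erw [get_map']
      by_cases hlast : j + 1 = c.length
      · have hidx : (j + 1 + 1) % (e :: List.map Subtype.val c).length = 0 := by
          rw [hn, hlast]
          exact Nat.mod_self _
        rw [get_congr _ hidx]
        have h4' := h4 ⟨j, hj⟩
        have hmod : (j + 1) % c.length = 0 := by rw [hlast]; exact Nat.mod_self _
        rw [get_congr _ hmod] at h4'
        have hinr : contrT G e (c.get ⟨j, hj⟩).val = Sum.inr () := by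
          rw [show contrT G e (c.get ⟨j, hj⟩).val = (tildeC G e).t (c.get ⟨j, hj⟩) from rfl,
            h4']
          exact h0
        erw [(nice_t_inr (nice_of_tildeC _)).1 hinr]
        rfl
      · have hidx : (j + 1 + 1) % (e :: List.map Subtype.val c).length = j + 1 + 1 := by
          rw [hn]; exact Nat.mod_eq_of_lt (by omega)
        rw [get_congr _ hidx, List.get_cons_succ]; erw [get_map']
        have h4' := h4 ⟨j, hj⟩
        have hmod : (j + 1) % c.length = j + 1 := Nat.mod_eq_of_lt (by omega)
        rw [get_congr _ hmod] at h4'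
        refine eq_of_junction h4' (hnotinr ⟨j + 1, by omega⟩ ?_)
        show j + 1 ≠ 0
        omega

lemma cycG_of_cycC (hne : G.s e ≠ G.t e) (c : List (tildeC G e).E)
    (hc : IsCohCycle (tildeC G e) c) :
    ∃ c' : List G.E, IsCohCycle G c' ∧ ∀ g ∈ c', g = e ∨ g ∈ c.map Subtype.val := by
  by_cases h : ∃ i : Fin c.length, G.s (c.get i).val = G.t e
  · obtain ⟨i, hi0⟩ := h
    have hi : contrS G e (c.get i).val = Sum.inr () :=
      (nice_s_inr (nice_of_tildeC _)).2 hi0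
    have hc₁ := isCohCycle_rotate hc i.val
    have hl : 0 < (c.rotate i.val).length := by
      rw [List.length_rotate]; exact i.pos
    have h0 : contrS G e ((c.rotate i.val).get ⟨0, hl⟩).val = Sum.inr () := by
      rw [List.get_rotate]
      have hz : (0 + i.val) % c.length = i.val := by
        rw [Nat.zero_add]; exact Nat.mod_eq_of_lt i.isLt
      rw [get_congr _ hz]
      exact hi
    refine ⟨e :: (c.rotate i.val).map Subtype.val,
      lift_cycle_inr hne _ hc₁ hl h0, ?_⟩
    intro g hg
    rcases List.mem_cons.1 hg with rfl | hg'
    · exact Or.inl rfl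
    · erw [List.map_rotate] at hg'
      exact Or.inr (List.mem_rotate.1 hg')
  · push_neg at h
    have h' : ∀ i : Fin c.length, contrS G e (c.get i).val ≠ Sum.inr () := by
      intro i hcon
      exact h i ((nice_s_inr (nice_of_tildeC _)).1 hcon)
    exact ⟨c.map Subtype.val, lift_cycle_noinr c hc h', fun g hg => Or.inr hg⟩

lemma contrS_map_nodup {d : List G.E} (h : (d.map G.s).Nodup)
    (hall : ∀ g ∈ d, CNice G e g) :
    (d.map (fun g => contrS G e g)).Nodup := by
  refine List.Nodup.map_on ?_ (h.of_map _)
  intro x hx y hy hxy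
  exact List.inj_on_of_nodup_map h hx hy
    (s_eq_of_contrS_eq (hall x hx) (hall y hy) hxy)

lemma build_cycC (d : List G.E) (hd : d ≠ []) (hnd : d.Nodup)
    (hsnd : (d.map (fun g => contrS G e g)).Nodup)
    (hall : ∀ g ∈ d, CNice G e g)
    (hjun : ∀ i : Fin d.length, contrT G e (d.get i)
        = contrS G e (d.get ⟨(i.val + 1) % d.length,
            Nat.mod_lt _ (Nat.lt_of_le_of_lt (Nat.zero_le _) i.isLt)⟩)) :
    ∃ c : List (tildeC G e).E, IsCohCycle (tildeC G e) c ∧ ∀ f ∈ c, f.val ∈ d := by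
  set F : {g // g ∈ d} → (tildeC G e).E :=
    fun x => ⟨x.val, nice_edge (hall x.val x.prop)⟩ with hF
  refine ⟨d.attach.map F, ⟨?_, ?_, ?_, ?_⟩, ?_⟩
  · simp [hd]
  · refine List.Nodup.of_map Subtype.val ?_
    have : List.map Subtype.val (d.attach.map F) = d := by
      rw [List.map_map]
      exact List.attach_map_subtype_val d
    erw [this]; exact hnd
  · have hmap : List.map (tildeC G e).s (d.attach.map F)
        = d.map (fun g => contrS G e g) := by
      rw [List.map_map]
      have hcomp : ((tildeC G e).s ∘ F) = (fun g => contrS G e g) ∘ Subtype.val := rfl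
      erw [hcomp, ← List.map_map, List.attach_map_subtype_val]; rfl
    rw [hmap]; exact hsnd
  · intro i
    have hlc : (d.attach.map F).length = d.length := by simp
    have hi' : i.val < d.length := hlc ▸ i.isLt
    have hgv : ∀ (j : ℕ) (hj : j < (d.attach.map F).length),
        ((d.attach.map F).get ⟨j, hj⟩).val = d.get ⟨j, by simpa using hj⟩ := by
      intro j hj
      erw [get_map']
      exact List.get_attach _ _
    show contrT G e ((d.attach.map F).get i).val
        = contrS G e ((d.attach.map F).get ⟨(i.val + 1) % (d.attach.map F).length, _⟩).val
    rw [hgv i.val i.isLt, hgv _ (Nat.mod_lt _ (by omega))]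
    have hmodeq : (i.val + 1) % (d.attach.map F).length = (i.val + 1) % d.length :=
      congrArg (fun L => (i.val + 1) % L) hlc
    rw [get_congr _ hmodeq]
    exact hjun ⟨i.val, hi'⟩
  · intro f hf
    rw [List.mem_map] at hf
    obtain ⟨x, hx, rfl⟩ := hf
    exact x.prop

lemma cycC_of_cycG (hne : G.s e ≠ G.t e) (c' : List G.E) (hc : IsCohCycle G c')
    (hall : ∀ g ∈ c', g ≠ e → CNice G e g) :
    ∃ c : List (tildeC G e).E, IsCohCycle (tildeC G e) c ∧ ∀ f ∈ c, f.val ∈ c' := by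
  by_cases he : e ∈ c'
  case neg =>
    have hall' : ∀ g ∈ c', CNice G e g := fun g hg => hall g hg (fun hh => he (hh ▸ hg))
    obtain ⟨h1, h2, h3, h4⟩ := hc
    exact build_cycC c' h1 h2 (contrS_map_nodup h3 hall') hall'
      (fun i => junction_of (hall' _ (List.get_mem _ _))
        (hall' _ (List.get_mem _ _)) (h4 i))
  case pos =>
    obtain ⟨i, hi⟩ := List.mem_iff_get.1 he
    have hc'' := isCohCycle_rotate hc i.val
    have hl : 0 < (c'.rotate i.val).length := by
      rw [List.length_rotate]; exact i.pos
    have hget0 : (c'.rotate i.val).get ⟨0, hl⟩ = e := by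
      rw [List.get_rotate]
      have hz : (0 + i.val) % c'.length = i.val := by
        rw [Nat.zero_add]; exact Nat.mod_eq_of_lt i.isLt
      rw [get_congr _ hz]
      exact hi
    obtain ⟨g, d, hgd⟩ : ∃ g d, c'.rotate i.val = g :: d := by
      rcases hcc : c'.rotate i.val with _ | ⟨g, d⟩
      · rw [hcc] at hl; simp at hl
      · exact ⟨g, d, rfl⟩
    have hge : e = g := by
      have h1q : (c'.rotate i.val)[0]? = some e := by
        rw [List.getElem?_eq_getElem hl]; exact congrArg some hget0
      rw [hgd] at h1q
      simpa using h1q.symm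
    subst hge
    rw [hgd] at hc''
    obtain ⟨h1, h2, h3, h4⟩ := hc''
    have hmem : ∀ x ∈ d, x ∈ c' := by
      intro x hx
      have : x ∈ c'.rotate i.val := by rw [hgd]; exact List.mem_cons_of_mem _ hx
      exact List.mem_rotate.1 this
    have henotd : e ∉ d := (List.nodup_cons.1 h2).1
    have halld : ∀ x ∈ d, CNice G e x := by
      intro x hx
      exact hall x (hmem x hx) (fun hh => henotd (hh ▸ hx))
    have hdne : d ≠ [] := by
      intro hdnil
      subst hdnil
      have := h4 ⟨0, by simp⟩
      simp at this
      exact hne this.symm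
    have hm : 0 < d.length := List.length_pos_iff.2 hdne
    have hlen : (e :: d).length = d.length + 1 := rfl
    -- first edge of d has source w
    have hw : G.s (d.get ⟨0, hm⟩) = G.t e := by
      have h4' := h4 ⟨0, by simp⟩
      have hidx : (0 + 1) % (e :: d).length = 0 + 1 := by
        rw [hlen]; exact Nat.mod_eq_of_lt (by omega)
      rw [get_congr _ hidx, List.get_cons_succ] at h4'
      exact h4'.symm
    -- last edge of d has target v
    have hv : G.t (d.get ⟨d.length - 1, by omega⟩) = G.s e := by
      have h4' := h4 ⟨d.length, by rw [hlen]; omega⟩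
      have hidx : (d.length + 1) % (e :: d).length = 0 := by
        rw [hlen]; exact Nat.mod_self _
      rw [get_congr _ hidx] at h4'
      have hd1 : d.length = (d.length - 1) + 1 := by omega
      rw [get_congr (e :: d) hd1, List.get_cons_succ] at h4'
      exact h4'
    have hsnodup : (d.map G.s).Nodup := by
      have := h3
      rw [List.map_cons, List.nodup_cons] at this
      exact this.2
    have hjun : ∀ i : Fin d.length, contrT G e (d.get i)
        = contrS G e (d.get ⟨(i.val + 1) % d.length,
            Nat.mod_lt _ (Nat.lt_of_le_of_lt (Nat.zero_le _) i.isLt)⟩) := by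
      intro i
      obtain ⟨iv, hivlt⟩ := i
      by_cases hlast : iv + 1 = d.length
      · have hmod : (iv + 1) % d.length = 0 := by rw [hlast]; exact Nat.mod_self _
        rw [get_congr _ hmod]
        have hti : G.t (d.get ⟨iv, hivlt⟩) = G.s e := by
          rw [get_congr d (show iv = d.length - 1 by omega)]
          exact hv
        exact ((nice_t_inr (halld _ (List.get_mem _ _))).2 hti).trans
          ((nice_s_inr (halld _ (List.get_mem _ _))).2 hw).symm
      · have hmod : (iv + 1) % d.length = iv + 1 := Nat.mod_eq_of_lt (by omega)
        rw [get_congr _ hmod]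
        have h4' := h4 ⟨iv + 1, by rw [hlen]; omega⟩
        rw [List.get_cons_succ] at h4'
        have hmod2 : (iv + 1 + 1) % (e :: d).length = iv + 1 + 1 := by
          rw [hlen]; exact Nat.mod_eq_of_lt (by omega)
        rw [get_congr _ hmod2, List.get_cons_succ] at h4'
        exact junction_of (halld _ (List.get_mem _ _)) (halld _ (List.get_mem _ _)) h4'
    obtain ⟨c, hcc, hcm⟩ := build_cycC d hdne (List.nodup_cons.1 h2).2
      (contrS_map_nodup hsnodup halld) halld hjun
    exact ⟨c, hcc, fun f hf => hmem _ (hcm f hf)⟩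

lemma nice_of_mem_multipath (hne : G.s e ≠ G.t e) {m : Finset G.E}
    (hm : G.IsMultipath m) (he : e ∈ m) {f : G.E} (hf : f ∈ m) (hfe : f ≠ e) :
    CNice G e f := by
  obtain ⟨hl, hs, ht, hcyc⟩ := hm
  refine ⟨hfe, fun h => hfe (hs f hf e he h), fun h => hfe (ht f hf e he h), ?_⟩
  rintro ⟨h1, h2⟩
  refine hcyc ⟨[e, f], ⟨by simp, ?_, ?_, ?_⟩, ?_⟩
  · simp [Ne.symm hfe]
  · simp [h1, hne]
  · intro i
    obtain ⟨iv, hi⟩ := i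
    have hi2 : iv < 2 := by simpa using hi
    interval_cases iv
    · simpa using h1.symm
    · simpa using h2
  · intro g hg
    simp only [List.mem_cons, List.mem_singleton, List.not_mem_nil, or_false] at hg
    rcases hg with rfl | rfl
    · exact he
    · exact hf

end ContractionAux

open DiGraph in
/-- For a non-loop edge `e` of a digraph `G`, the map
`C_e`, sending a multipath `m` of `G` containing `e` to the set of its edges
surviving in `C̃_e(G)` (the MP-contraction `G ⫽ e` with the loops at the new
vertex deleted), is an order isomorphism from the poset `Mult_e(G)` of
multipaths of `G` containing `e` onto the poset `Mult(C̃_e(G))`, both ordered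
by inclusion: it is well defined, order preserving and reflecting, and
surjective (hence bijective). -/
theorem contraction_poset_isomorphism (G : DiGraph) (hU : G.EdgeUnique)
    (e : G.E) (hne : G.s e ≠ G.t e) :
    (∀ m : Finset G.E, G.IsMultipath m → e ∈ m →
       (tildeC G e).IsMultipath
         (Finset.univ.filter (fun f : (tildeC G e).E => f.val ∈ m))) ∧
    (∀ m m' : Finset G.E, G.IsMultipath m → e ∈ m → G.IsMultipath m' → e ∈ m' →
       (m ⊆ m' ↔
         (Finset.univ.filter (fun f : (tildeC G e).E => f.val ∈ m)) ⊆
           (Finset.univ.filter (fun f : (tildeC G e).E => f.val ∈ m')))) ∧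
    (∀ mc : Finset (tildeC G e).E, (tildeC G e).IsMultipath mc →
       ∃ m : Finset G.E, G.IsMultipath m ∧ e ∈ m ∧
         (Finset.univ.filter (fun f : (tildeC G e).E => f.val ∈ m)) = mc) := by
  classical
  have _ := hU
  refine ⟨?_, ?_, ?_⟩
  · -- part 1: well-definedness
    intro m hm he
    have hmm := hm
    obtain ⟨hl, hs, ht, hcyc⟩ := hm
    refine ⟨?_, ?_, ?_, ?_⟩
    · intro f hf
      have hfm : f.val ∈ m := (Finset.mem_filter.1 hf).2
      intro hst
      have hst' : contrS G e f.val = contrT G e f.val := hst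
      by_cases hinr : contrS G e f.val = Sum.inr ()
      · exact f.2.2 ⟨hinr, hst'.symm.trans hinr⟩
      · have hinr' : contrT G e f.val ≠ Sum.inr () := fun hh => hinr (hst'.trans hh)
        obtain ⟨p1, e1⟩ := contrS_val hinr
        obtain ⟨p2, e2⟩ := contrT_val hinr'
        rw [e1, e2] at hst'
        injection hst' with hq
        exact hl f.val hfm (congrArg Subtype.val hq)
    · intro f hf g hg hsg
      have hse : G.s f.val = G.s g.val :=
        s_eq_of_contrS_eq (nice_of_tildeC f) (nice_of_tildeC g) hsg
      exact Subtype.ext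
        (hs f.val (Finset.mem_filter.1 hf).2 g.val (Finset.mem_filter.1 hg).2 hse)
    · intro f hf g hg htg
      have hte : G.t f.val = G.t g.val :=
        t_eq_of_contrT_eq (nice_of_tildeC f) (nice_of_tildeC g) htg
      exact Subtype.ext
        (ht f.val (Finset.mem_filter.1 hf).2 g.val (Finset.mem_filter.1 hg).2 hte)
    · rintro ⟨c, hcc, hcm⟩
      obtain ⟨c', hc', hmemc⟩ := cycG_of_cycC hne c hcc
      refine hcyc ⟨c', hc', ?_⟩
      intro g hg
      rcases hmemc g hg with rfl | hg'
      · exact he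
      · erw [List.mem_map] at hg'
        obtain ⟨x, hx, rfl⟩ := hg'
        exact (Finset.mem_filter.1 (hcm x hx)).2
  · -- part 2: order iso
    intro m m' hm he hm' he'
    constructor
    · intro hsub f hf
      rw [Finset.mem_filter] at hf ⊢
      exact ⟨hf.1, hsub hf.2⟩
    · intro hsub f hf
      by_cases hfe : f = e
      · exact hfe ▸ he'
      · have hn : CNice G e f := nice_of_mem_multipath hne hm he hf hfe
        have hfc : (⟨f, nice_edge hn⟩ : (tildeC G e).E) ∈
            Finset.univ.filter (fun f : (tildeC G e).E => f.val ∈ m) :=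
          Finset.mem_filter.2 ⟨Finset.mem_univ (α := (tildeC G e).E) _, hf⟩
        exact (Finset.mem_filter.1 (hsub hfc)).2
  · -- part 3: surjectivity
    intro mc hmc
    obtain ⟨cl, cs, ct, ccyc⟩ := hmc
    refine ⟨insert e (mc.image Subtype.val), ⟨?_, ?_, ?_, ?_⟩,
      Finset.mem_insert_self _ _, ?_⟩
    · intro g hg
      rcases Finset.mem_insert.1 hg with rfl | hg'
      · exact hne
      · obtain ⟨f, hf, rfl⟩ := Finset.mem_image.1 hg'
        intro hst
        have hnf := nice_of_tildeC f
        have h1 : contrS G e f.val ≠ Sum.inr () := by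
          rw [ne_eq, nice_s_inr hnf, hst]
          exact hnf.2.2.1
        have h2 : contrT G e f.val ≠ Sum.inr () := by
          rw [ne_eq, nice_t_inr hnf, ← hst]
          exact hnf.2.1
        obtain ⟨p1, e1⟩ := contrS_val h1
        obtain ⟨p2, e2⟩ := contrT_val h2
        refine cl f hf ?_
        show contrS G e f.val = contrT G e f.val
        rw [e1, e2]
        exact congrArg Sum.inl (Subtype.ext hst)
    · intro g hg g' hg' hss
      rcases Finset.mem_insert.1 hg with rfl | hg1 <;>
        rcases Finset.mem_insert.1 hg' with rfl | hg2
      · rfl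
      · obtain ⟨f, hf, rfl⟩ := Finset.mem_image.1 hg2
        exact absurd hss.symm (nice_of_tildeC f).2.1
      · obtain ⟨f, hf, rfl⟩ := Finset.mem_image.1 hg1
        exact absurd hss (nice_of_tildeC f).2.1
      · obtain ⟨f, hf, rfl⟩ := Finset.mem_image.1 hg1
        obtain ⟨f', hf', rfl⟩ := Finset.mem_image.1 hg2
        have hff := cs f hf f' hf'
          (contrS_congr (nice_of_tildeC f) (nice_of_tildeC f') hss)
        rw [hff]
    · intro g hg g' hg' htt
      rcases Finset.mem_insert.1 hg with rfl | hg1 <;>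
        rcases Finset.mem_insert.1 hg' with rfl | hg2
      · rfl
      · obtain ⟨f, hf, rfl⟩ := Finset.mem_image.1 hg2
        exact absurd htt.symm (nice_of_tildeC f).2.2.1
      · obtain ⟨f, hf, rfl⟩ := Finset.mem_image.1 hg1
        exact absurd htt (nice_of_tildeC f).2.2.1
      · obtain ⟨f, hf, rfl⟩ := Finset.mem_image.1 hg1
        obtain ⟨f', hf', rfl⟩ := Finset.mem_image.1 hg2
        have hff := ct f hf f' hf'
          (contrT_congr (nice_of_tildeC f) (nice_of_tildeC f') htt)
        rw [hff]
    · rintro ⟨c', hcc', hc'm⟩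
      have hall : ∀ g ∈ c', g ≠ e → CNice G e g := by
        intro g hg hge
        rcases Finset.mem_insert.1 (hc'm g hg) with rfl | hg'
        · exact absurd rfl hge
        · obtain ⟨f, hf, rfl⟩ := Finset.mem_image.1 hg'
          exact nice_of_tildeC f
      obtain ⟨c, hcC, hcm⟩ := cycC_of_cycG hne c' hcc' hall
      refine ccyc ⟨c, hcC, ?_⟩
      intro f hf
      have hfm := hc'm f.val (hcm f hf)
      rcases Finset.mem_insert.1 hfm with heq | hg'
      · exact absurd heq (nice_of_tildeC f).1
      · obtain ⟨f', hf', hval⟩ := Finset.mem_image.1 hg'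
        rwa [show f' = f from Subtype.ext hval] at hf'
    · ext f
      simp only [Finset.mem_filter, Finset.mem_univ, true_and, Finset.mem_insert]
      erw [Finset.mem_image]
      constructor
      · rintro (heq | ⟨g, hg, hval⟩)
        · exact absurd heq (nice_of_tildeC f).1
        · rwa [show g = f from Subtype.ext hval] at hg
      · intro h
        exact Or.inr ⟨f, h, rfl⟩
end
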